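/- Let (Ω, μ) be a probability space, let Z, ε : Ω → ℝ^p be independent random vectors, and fix θ ∈ ℝ^p. Assume that exp⟨θ,Z⟩, Z_j·exp⟨θ,Z⟩, exp⟨θ,ε⟩, and ε_j·exp⟨θ,ε⟩ are integrable for every coordinate j, that E[exp⟨θ,Z⟩] > 0, and set M := E[exp⟨θ,ε⟩] > 0. Let Z* = Z + ε. Then E[exp⟨θ,Z*⟩] = M · E[exp⟨θ,Z⟩] > 0, and for every coordinate j: E[Z*_j exp⟨θ,Z*⟩]/E[exp⟨θ,Z*⟩] − E[Z_j exp⟨θ,Z⟩]/E[exp⟨θ,Z⟩] = E[ε_j exp⟨θ,ε⟩]/M. In particular, if ε_j = 0 almost surely, the j-th population imbalance on the left-hand side is zero. -/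

import Mathlib

open scoped RealInnerProductSpace BigOperators
open MeasureTheory

/-- Under the additive measurement error model `Z* = Z + ε` with `Z ⟂ ε`,
the tilted mean of `Z*` factorizes, and the population imbalance of the true covariate in
coordinate `j` equals `E[ε_j exp⟪θ,ε⟫]/M` where `M = E[exp⟪θ,ε⟫]`; in particular it vanishes
in coordinates where the error is zero almost surely. -/
theorem naive_tilted_mean_imbalance
    {Ω : Type*} [MeasurableSpace Ω] (μ : Measure Ω) [IsProbabilityMeasure μ]
    (p : ℕ) (Z ε : Ω → EuclideanSpace ℝ (Fin p)) (θ : EuclideanSpace ℝ (Fin p))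
    (hZ : Measurable Z) (hε : Measurable ε)
    (hindep : ProbabilityTheory.IndepFun Z ε μ)
    (hint1 : Integrable (fun ω => Real.exp ⟪θ, Z ω⟫) μ)
    (hint2 : ∀ j, Integrable (fun ω => Z ω j * Real.exp ⟪θ, Z ω⟫) μ)
    (hint3 : Integrable (fun ω => Real.exp ⟪θ, ε ω⟫) μ)
    (hint4 : ∀ j, Integrable (fun ω => ε ω j * Real.exp ⟪θ, ε ω⟫) μ)
    (hpos : 0 < ∫ ω, Real.exp ⟪θ, Z ω⟫ ∂μ)
    (M : ℝ) (hM : M = ∫ ω, Real.exp ⟪θ, ε ω⟫ ∂μ) (hMpos : 0 < M)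
    (Zstar : Ω → EuclideanSpace ℝ (Fin p)) (hZstar : ∀ ω, Zstar ω = Z ω + ε ω) :
    (∫ ω, Real.exp ⟪θ, Zstar ω⟫ ∂μ = M * ∫ ω, Real.exp ⟪θ, Z ω⟫ ∂μ) ∧
    (0 < ∫ ω, Real.exp ⟪θ, Zstar ω⟫ ∂μ) ∧
    (∀ j, (∫ ω, Zstar ω j * Real.exp ⟪θ, Zstar ω⟫ ∂μ) / (∫ ω, Real.exp ⟪θ, Zstar ω⟫ ∂μ)
        - (∫ ω, Z ω j * Real.exp ⟪θ, Z ω⟫ ∂μ) / (∫ ω, Real.exp ⟪θ, Z ω⟫ ∂μ)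
        = (∫ ω, ε ω j * Real.exp ⟪θ, ε ω⟫ ∂μ) / M) ∧
    (∀ j, (∀ᵐ ω ∂μ, ε ω j = 0) →
      (∫ ω, Zstar ω j * Real.exp ⟪θ, Zstar ω⟫ ∂μ) / (∫ ω, Real.exp ⟪θ, Zstar ω⟫ ∂μ)
        - (∫ ω, Z ω j * Real.exp ⟪θ, Z ω⟫ ∂μ) / (∫ ω, Real.exp ⟪θ, Z ω⟫ ∂μ) = 0) := by
  -- abbreviations
  set F : ℝ := ∫ ω, Real.exp ⟪θ, Z ω⟫ ∂μ with hF
  -- measurability of building blocks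
  have hexp : Measurable fun x : EuclideanSpace ℝ (Fin p) => Real.exp ⟪θ, x⟫ :=
    (Real.continuous_exp.comp (continuous_const.inner continuous_id)).measurable
  have hproj : ∀ j, Measurable fun x : EuclideanSpace ℝ (Fin p) => x j * Real.exp ⟪θ, x⟫ := by
    intro j
    exact ((EuclideanSpace.proj (𝕜 := ℝ) j).continuous.mul
      (Real.continuous_exp.comp (continuous_const.inner continuous_id))).measurable
  -- independence of composed functions
  have hind1 : ProbabilityTheory.IndepFun (fun ω => Real.exp ⟪θ, Z ω⟫)
      (fun ω => Real.exp ⟪θ, ε ω⟫) μ := hindep.comp hexp hexp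
  have hkey : ∀ ω, Real.exp ⟪θ, Zstar ω⟫ = Real.exp ⟪θ, Z ω⟫ * Real.exp ⟪θ, ε ω⟫ := by
    intro ω
    rw [hZstar ω, inner_add_right, Real.exp_add]
  have hfact : ∫ ω, Real.exp ⟪θ, Zstar ω⟫ ∂μ = F * M := by
    calc ∫ ω, Real.exp ⟪θ, Zstar ω⟫ ∂μ
        = ∫ ω, Real.exp ⟪θ, Z ω⟫ * Real.exp ⟪θ, ε ω⟫ ∂μ := by
          simp_rw [hkey]
      _ = F * M := by
          rw [hF, hM]
          have h := hind1.integral_mul_eq_mul_integral hint1.aestronglyMeasurable hint3.aestronglyMeasurable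
          simpa [Pi.mul_apply] using h
  have hFpos : 0 < F := hpos
  have hstarpos : 0 < ∫ ω, Real.exp ⟪θ, Zstar ω⟫ ∂μ := by
    rw [hfact]; exact mul_pos hFpos hMpos
  -- coordinate identity
  have hcoord : ∀ j, ∫ ω, Zstar ω j * Real.exp ⟪θ, Zstar ω⟫ ∂μ
      = (∫ ω, Z ω j * Real.exp ⟪θ, Z ω⟫ ∂μ) * M
        + F * ∫ ω, ε ω j * Real.exp ⟪θ, ε ω⟫ ∂μ := by
    intro j
    have hindA : ProbabilityTheory.IndepFun (fun ω => Z ω j * Real.exp ⟪θ, Z ω⟫)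
        (fun ω => Real.exp ⟪θ, ε ω⟫) μ := hindep.comp (hproj j) hexp
    have hindB : ProbabilityTheory.IndepFun (fun ω => Real.exp ⟪θ, Z ω⟫)
        (fun ω => ε ω j * Real.exp ⟪θ, ε ω⟫) μ := hindep.comp hexp (hproj j)
    have hA : Integrable (fun ω => (Z ω j * Real.exp ⟪θ, Z ω⟫) * Real.exp ⟪θ, ε ω⟫) μ :=
      hindA.integrable_mul (hint2 j) hint3
    have hB : Integrable (fun ω => Real.exp ⟪θ, Z ω⟫ * (ε ω j * Real.exp ⟪θ, ε ω⟫)) μ :=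
      hindB.integrable_mul hint1 (hint4 j)
    have hptwise : ∀ ω, Zstar ω j * Real.exp ⟪θ, Zstar ω⟫
        = (Z ω j * Real.exp ⟪θ, Z ω⟫) * Real.exp ⟪θ, ε ω⟫
          + Real.exp ⟪θ, Z ω⟫ * (ε ω j * Real.exp ⟪θ, ε ω⟫) := by
      intro ω
      have : Zstar ω j = Z ω j + ε ω j := by rw [hZstar ω]; rfl
      rw [this, hkey ω]; ring
    calc ∫ ω, Zstar ω j * Real.exp ⟪θ, Zstar ω⟫ ∂μ
        = ∫ ω, ((Z ω j * Real.exp ⟪θ, Z ω⟫) * Real.exp ⟪θ, ε ω⟫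
            + Real.exp ⟪θ, Z ω⟫ * (ε ω j * Real.exp ⟪θ, ε ω⟫)) ∂μ := by
          simp_rw [hptwise]
      _ = (∫ ω, (Z ω j * Real.exp ⟪θ, Z ω⟫) * Real.exp ⟪θ, ε ω⟫ ∂μ)
            + ∫ ω, Real.exp ⟪θ, Z ω⟫ * (ε ω j * Real.exp ⟪θ, ε ω⟫) ∂μ :=
          integral_add hA hB
      _ = (∫ ω, Z ω j * Real.exp ⟪θ, Z ω⟫ ∂μ) * M
            + F * ∫ ω, ε ω j * Real.exp ⟪θ, ε ω⟫ ∂μ := by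
          have h1 := hindA.integral_mul_eq_mul_integral (hint2 j).aestronglyMeasurable hint3.aestronglyMeasurable
          have h2 := hindB.integral_mul_eq_mul_integral hint1.aestronglyMeasurable (hint4 j).aestronglyMeasurable
          have h1' : (∫ ω, (Z ω j * Real.exp ⟪θ, Z ω⟫) * Real.exp ⟪θ, ε ω⟫ ∂μ)
              = (∫ ω, Z ω j * Real.exp ⟪θ, Z ω⟫ ∂μ) * ∫ ω, Real.exp ⟪θ, ε ω⟫ ∂μ := h1
          have h2' : (∫ ω, Real.exp ⟪θ, Z ω⟫ * (ε ω j * Real.exp ⟪θ, ε ω⟫) ∂μ)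
              = (∫ ω, Real.exp ⟪θ, Z ω⟫ ∂μ) * ∫ ω, ε ω j * Real.exp ⟪θ, ε ω⟫ ∂μ := h2
          rw [h1', h2', hM, hF]
  have hmain : ∀ j, (∫ ω, Zstar ω j * Real.exp ⟪θ, Zstar ω⟫ ∂μ) / (∫ ω, Real.exp ⟪θ, Zstar ω⟫ ∂μ)
      - (∫ ω, Z ω j * Real.exp ⟪θ, Z ω⟫ ∂μ) / F
      = (∫ ω, ε ω j * Real.exp ⟪θ, ε ω⟫ ∂μ) / M := by
    intro j
    rw [hcoord j, hfact]
    field_simp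
    ring
  refine ⟨by rw [hfact]; ring, hstarpos, hmain, ?_⟩
  intro j hzero
  have h0 : ∫ ω, ε ω j * Real.exp ⟪θ, ε ω⟫ ∂μ = 0 := by
    have : (fun ω => ε ω j * Real.exp ⟪θ, ε ω⟫) =ᵐ[μ] 0 :=
      hzero.mono fun ω h => by simp [h]
    exact integral_eq_zero_of_ae this
  rw [hmain j, h0, zero_div]
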